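/- Let h, H be nonnegative integers with 0 ≤ h < H and H ≥ 1, let X ≥ 1 be real, let m ≥ 1 be an integer, let a ∈ ℤ, q ∈ ℕ, β ∈ ℝ and α = a/q + β. Then ∑_{1 ≤ u ≤ X, u ≡ h (mod H)} e(α u^m) = (X/(qH)) · (∑_{k=0}^{q-1} e(a(Hk+h)^m/q)) · ∫_0^1 e(β X^m z^m) dz + O(q + q X^m |β|), where e(t) = exp(2πi t) and the implied constant depends only on m. -/

import Mathlib

open scoped BigOperators

noncomputable def e (t : ℝ) : ℂ := Complex.exp (2 * Real.pi * Complex.I * t)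

lemma norm_e (t : ℝ) : ‖e t‖ = 1 := by
  simp [e, Complex.norm_exp]

lemma e_add (x y : ℝ) : e (x + y) = e x * e y := by
  simp [e, ← Complex.exp_add]; ring_nf

lemma e_int_add (x : ℝ) (n : ℤ) : e (x + n) = e x := by
  rw [e_add]
  have : e (n : ℝ) = 1 := by
    simpa [e, mul_comm, mul_assoc, mul_left_comm] using Complex.exp_int_mul_two_pi_mul_I n
  rw [this, mul_one]

lemma cont_f (β : ℝ) (m : ℕ) : Continuous (fun t : ℝ => e (β * t ^ m)) := by
  unfold e
  fun_prop

lemma hasDerivAt_f (β : ℝ) (m : ℕ) (s : ℝ) :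
    HasDerivAt (fun t : ℝ => e (β * t ^ m))
      (2 * Real.pi * Complex.I * β * m * s ^ (m - 1) * e (β * s ^ m)) s := by
  have h1 : HasDerivAt (fun t : ℝ => ((t : ℂ)) ^ m) (m * (s : ℂ) ^ (m - 1)) s :=
    (hasDerivAt_pow m (s : ℂ)).comp_ofReal
  have h2 : HasDerivAt (fun t : ℝ => 2 * Real.pi * Complex.I * ((β : ℂ) * (t : ℂ) ^ m))
      (2 * Real.pi * Complex.I * ((β : ℂ) * (m * (s:ℂ) ^ (m - 1)))) s :=
    ((h1.const_mul (β : ℂ)).const_mul (2 * Real.pi * Complex.I))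
  have h3 := h2.cexp
  have : (fun t : ℝ => Complex.exp (2 * Real.pi * Complex.I * ((β:ℂ) * (t:ℂ) ^ m)))
      = fun t : ℝ => e (β * t ^ m) := by
    funext t; simp [e]
  rw [this] at h3
  convert h3 using 1
  simp [e]
  ring

lemma f_lip (β : ℝ) (m : ℕ) {Y s t : ℝ} (hY : 0 ≤ Y)
    (hs : s ∈ Set.Icc 0 Y) (ht : t ∈ Set.Icc 0 Y) :
    ‖e (β * s ^ m) - e (β * t ^ m)‖ ≤ 2 * Real.pi * |β| * m * Y ^ (m - 1) * |s - t| := by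
  have := Convex.norm_image_sub_le_of_norm_hasDerivWithin_le
    (f := fun t : ℝ => e (β * t ^ m))
    (f' := fun s : ℝ => 2 * Real.pi * Complex.I * β * m * s ^ (m - 1) * e (β * s ^ m))
    (C := 2 * Real.pi * |β| * m * Y ^ (m - 1)) (s := Set.Icc 0 Y)
    (fun x _ => (hasDerivAt_f β m x).hasDerivWithinAt)
    (fun x hx => by
      rw [norm_mul, norm_e, mul_one]
      have hx0 : (0:ℝ) ≤ x := hx.1
      have hxY : x ≤ Y := hx.2
      have : ‖(2 * Real.pi * Complex.I * β * m * (x:ℂ) ^ (m-1) : ℂ)‖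
          = 2 * Real.pi * |β| * m * x ^ (m-1) := by
        simp [norm_mul, Complex.norm_real, abs_of_nonneg Real.pi_pos.le, abs_of_nonneg hx0,
          Complex.norm_natCast]
      rw [this]
      gcongr)
    (convex_Icc 0 Y) ht hs
  calc ‖e (β * s ^ m) - e (β * t ^ m)‖ ≤ 2 * Real.pi * |β| * m * Y ^ (m-1) * ‖s - t‖ := this
    _ = 2 * Real.pi * |β| * m * Y ^ (m-1) * |s - t| := by rw [Real.norm_eq_abs]


set_option maxHeartbeats 2000000 in
lemma prog (β : ℝ) (m : ℕ) (hm : 1 ≤ m) {X : ℝ} (hX : 1 ≤ X) {d r : ℕ} (hd : 0 < d) (hrd : r < d) :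
    ‖(∑ u ∈ Finset.Icc 1 ⌊X⌋₊, if u % d = r then e (β * (u:ℝ)^m) else 0)
      - (1/(d:ℂ)) * ∫ t in (0:ℝ)..X, e (β * t^m)‖
    ≤ 5 + 2 * Real.pi * (m:ℝ) * 2^m * |β| * X^m := by
  set f : ℝ → ℂ := fun t => e (β * t ^ m) with hf
  have hfc : Continuous f := cont_f β m
  have hfi : ∀ a b : ℝ, IntervalIntegrable f MeasureTheory.volume a b :=
    fun a b => hfc.intervalIntegrable a b
  set M := ⌊X⌋₊ with hM
  have hX0 : (0:ℝ) < X := lt_of_lt_of_le one_pos hX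
  have hMX : (M:ℝ) ≤ X := Nat.floor_le hX0.le
  have hXM1 : X < (M:ℝ) + 1 := Nat.lt_floor_add_one X
  set A : ℝ := (d:ℝ) with hA
  have hA0 : (0:ℝ) < A := by rw [hA]; exact_mod_cast hd
  set n0 : ℕ := if r = 0 then 1 else 0 with hn0
  set N : ℕ := if r ≤ M then (M - r)/d + 1 else n0 with hN
  have hn0le : n0 ≤ 1 := by rw [hn0]; split <;> omega
  have hn0N : n0 ≤ N := by
    rw [hN]; split
    · exact hn0le.trans (Nat.le_add_left 1 _)
    · exact le_rfl
  -- membership facts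
  have F1 : ∀ n, n ∈ Finset.Ico n0 N → 1 ≤ r + d*n ∧ r + d*n ≤ M := by
    intro n hn
    rw [Finset.mem_Ico] at hn
    constructor
    · rcases Nat.eq_zero_or_pos r with hr | hr
      · have : n0 = 1 := by rw [hn0, if_pos hr]
        have hn1 : 1 ≤ n := this ▸ hn.1
        have := Nat.mul_le_mul_left d hn1
        omega
      · omega
    · by_cases hrM : r ≤ M
      · have hNr : N = (M - r)/d + 1 := by rw [hN, if_pos hrM]
        have hn2 : n ≤ (M - r)/d := by omega
        have := Nat.mul_le_mul_left d hn2
        have h2 : d * ((M - r)/d) ≤ M - r := Nat.mul_div_le _ _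
        omega
      · have : N = n0 := by rw [hN, if_neg hrM]
        omega
  have F3 : ∀ n, 1 ≤ r + d*n → r + d*n ≤ M → n ∈ Finset.Ico n0 N := by
    intro n h1 h2
    rw [Finset.mem_Ico]
    constructor
    · rw [hn0]; split
      · rename_i hr
        rcases Nat.eq_zero_or_pos n with hn'|hn'
        · subst hr; subst hn'; simp at h1
        · exact hn'
      · omega
    · have hrM : r ≤ M := by omega
      rw [hN, if_pos hrM]
      have : n ≤ (M - r)/d := (Nat.le_div_iff_mul_le hd).mpr (by rw [Nat.mul_comm]; omega)
      omega
  -- reindex the sum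
  have hT : (∑ u ∈ Finset.Icc 1 M, if u % d = r then e (β * (u:ℝ)^m) else 0)
      = ∑ n ∈ Finset.Ico n0 N, f (((r + d*n : ℕ)) : ℝ) := by
    rw [← Finset.sum_filter]
    refine Finset.sum_bij' (fun u _ => u / d) (fun n _ => r + d * n) ?_ ?_ ?_ ?_ ?_
    · intro u hu
      rw [Finset.mem_filter, Finset.mem_Icc] at hu
      obtain ⟨⟨hu1, hu2⟩, hu3⟩ := hu
      have hud : r + d * (u / d) = u := by
        have := Nat.div_add_mod u d
        omega
      show u / d ∈ Finset.Ico n0 N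
      exact F3 _ (by omega) (by omega)
    · intro n hn
      rw [Finset.mem_filter, Finset.mem_Icc]
      have := F1 n hn
      refine ⟨⟨this.1, this.2⟩, ?_⟩
      rw [Nat.add_mul_mod_self_left, Nat.mod_eq_of_lt hrd]
    · intro u hu
      rw [Finset.mem_filter] at hu
      show r + d * (u / d) = u
      have := Nat.div_add_mod u d
      omega
    · intro n _
      show (r + d * n) / d = n
      rw [Nat.add_mul_div_left _ _ hd, Nat.div_eq_of_lt hrd, Nat.zero_add]
    · intro u hu
      rw [Finset.mem_filter] at hu
      have huu : r + d * (u / d) = u := by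
        have := Nat.div_add_mod u d
        omega
      show f ((u:ℕ):ℝ) = f (((r + d * (u / d) : ℕ)):ℝ)
      rw [huu]
  -- split the integral
  have hadj : ∑ n ∈ Finset.Ico n0 N, ∫ t in (A*(n:ℝ))..(A*(n:ℝ) + A), f t
      = ∫ t in (A*(n0:ℝ))..(A*(N:ℝ)), f t := by
    rw [Finset.sum_Ico_eq_sum_range]
    have key := intervalIntegral.sum_integral_adjacent_intervals
      (a := fun i => A * ((n0 + i : ℕ) : ℝ)) (n := N - n0) (μ := MeasureTheory.volume)
      (f := f) (fun k _ => hfi _ _)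
    have h1 : ∀ k, A * (((n0 + (k+1) : ℕ)) : ℝ) = A * ((n0 + k : ℕ) : ℝ) + A := by
      intro k; push_cast; ring
    simp only [h1] at key
    rw [show n0 + 0 = n0 from rfl, show n0 + (N - n0) = N from by omega] at key
    exact key
  have hsplit : (∫ t in (0:ℝ)..X, f t)
      = (∫ t in (0:ℝ)..(A*(n0:ℝ)), f t)
        + (∑ n ∈ Finset.Ico n0 N, ∫ t in (A*(n:ℝ))..(A*(n:ℝ) + A), f t)
        + ∫ t in (A*(N:ℝ))..X, f t := by
    rw [hadj, intervalIntegral.integral_add_adjacent_intervals (hfi _ _) (hfi _ _),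
      intervalIntegral.integral_add_adjacent_intervals (hfi _ _) (hfi _ _)]
  have hdc : (d:ℂ) ≠ 0 := by
    exact_mod_cast Nat.pos_iff_ne_zero.mp hd
  have hdec : (∑ n ∈ Finset.Ico n0 N, f (((r + d*n : ℕ)) : ℝ))
        - (1/(d:ℂ)) * ∫ t in (0:ℝ)..X, f t
      = (∑ n ∈ Finset.Ico n0 N,
          (f (((r + d*n : ℕ)) : ℝ) - (1/(d:ℂ)) * ∫ t in (A*(n:ℝ))..(A*(n:ℝ) + A), f t))
        - (1/(d:ℂ)) * (∫ t in (0:ℝ)..(A*(n0:ℝ)), f t)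
        - (1/(d:ℂ)) * ∫ t in (A*(N:ℝ))..X, f t := by
    rw [hsplit, Finset.sum_sub_distrib, mul_add, mul_add, Finset.mul_sum]
    ring
  -- norm bounds
  have hnormd : ‖(1/(d:ℂ))‖ = 1/A := by
    rw [hA]; simp
  have hcell : ∀ b c : ℝ, ‖∫ t in b..c, f t‖ ≤ |c - b| := by
    intro b c
    have := intervalIntegral.norm_integral_le_of_norm_le_const (C := 1) (f := f) (a := b) (b := c)
      (fun x _ => by rw [hf]; exact (norm_e _).le)
    simpa using this
  have hb0 : ‖(1/(d:ℂ)) * ∫ t in (0:ℝ)..(A*(n0:ℝ)), f t‖ ≤ 1 := by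
    rw [norm_mul, hnormd]
    have h1 : ‖∫ t in (0:ℝ)..(A*(n0:ℝ)), f t‖ ≤ A * 1 := by
      have := hcell 0 (A*(n0:ℝ))
      have hc : |A*(n0:ℝ) - 0| = A * (n0:ℝ) := by
        rw [sub_zero, abs_of_nonneg (by positivity)]
      rw [hc] at this
      refine this.trans ?_
      have : (n0:ℝ) ≤ 1 := by exact_mod_cast hn0le
      nlinarith
    calc 1/A * ‖∫ t in (0:ℝ)..(A*(n0:ℝ)), f t‖ ≤ 1/A * (A*1) := by
          apply mul_le_mul_of_nonneg_left h1 (by positivity)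
      _ = 1 := by field_simp
  -- endpoint estimates
  have F4r : A * (N:ℝ) ≤ X + A := by
    by_cases hrM : r ≤ M
    · have hNr : N = (M - r)/d + 1 := by rw [hN, if_pos hrM]
      have hnat : d * N ≤ M + d := by
        have h2 : d * ((M - r)/d) ≤ M - r := Nat.mul_div_le _ _
        have : d * N = d * ((M - r)/d) + d := by rw [hNr, Nat.mul_add, Nat.mul_one]
        omega
      calc A * (N:ℝ) = ((d * N : ℕ) : ℝ) := by rw [hA]; push_cast; ring
        _ ≤ ((M + d : ℕ) : ℝ) := by exact_mod_cast hnat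
        _ ≤ X + A := by push_cast; rw [hA]; linarith
    · have hNr : N = n0 := by rw [hN, if_neg hrM]
      have : (N:ℝ) ≤ 1 := by exact_mod_cast hNr ▸ hn0le
      nlinarith
  have F5r : X ≤ A * (N:ℝ) + 2*A := by
    by_cases hrM : r ≤ M
    · have hNr : N = (M - r)/d + 1 := by rw [hN, if_pos hrM]
      have hnat : M + 1 ≤ d * N + d := by
        have h2 := Nat.div_add_mod (M - r) d
        have h3 : (M - r) % d < d := Nat.mod_lt _ hd
        have : d * N = d * ((M - r)/d) + d := by rw [hNr, Nat.mul_add, Nat.mul_one]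
        omega
      have : ((M:ℝ) + 1) ≤ A * (N:ℝ) + A := by
        have := (Nat.cast_le (α := ℝ)).mpr hnat
        push_cast at this
        rw [hA]
        linarith
      linarith
    · have hMd : (M:ℝ) + 1 ≤ A := by
        rw [hA]
        have : M + 1 ≤ d := by omega
        exact_mod_cast this
      have hNn : (0:ℝ) ≤ A * (N:ℝ) := by positivity
      linarith
  have hb2 : ‖(1/(d:ℂ)) * ∫ t in (A*(N:ℝ))..X, f t‖ ≤ 2 := by
    rw [norm_mul, hnormd]
    have h1 : ‖∫ t in (A*(N:ℝ))..X, f t‖ ≤ 2*A := by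
      refine (hcell _ _).trans ?_
      rw [abs_le]
      constructor <;> linarith
    calc 1/A * ‖∫ t in (A*(N:ℝ))..X, f t‖ ≤ 1/A * (2*A) := by
          apply mul_le_mul_of_nonneg_left h1 (by positivity)
      _ = 2 := by field_simp
  set c0 : ℝ := 2 * Real.pi * |β| * (m:ℝ) * (2*X)^(m-1) with hc0
  have hc0nn : 0 ≤ c0 := by rw [hc0]; positivity
  have htriv : ∀ n : ℕ,
      ‖f (((r + d*n : ℕ)) : ℝ) - (1/(d:ℂ)) * ∫ t in (A*(n:ℝ))..(A*(n:ℝ)+A), f t‖ ≤ 2 := by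
    intro n
    refine (norm_sub_le _ _).trans ?_
    have h1 : ‖f (((r + d*n : ℕ)) : ℝ)‖ = 1 := by rw [hf]; exact norm_e _
    have h2 : ‖(1/(d:ℂ)) * ∫ t in (A*(n:ℝ))..(A*(n:ℝ)+A), f t‖ ≤ 1 := by
      rw [norm_mul, hnormd]
      have h3 := hcell (A*(n:ℝ)) (A*(n:ℝ)+A)
      rw [show (A*(n:ℝ)+A) - A*(n:ℝ) = A by ring, abs_of_nonneg hA0.le] at h3
      calc 1/A * ‖∫ t in (A*(n:ℝ))..(A*(n:ℝ)+A), f t‖ ≤ 1/A * A := by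
            apply mul_le_mul_of_nonneg_left h3 (by positivity)
        _ = 1 := by field_simp
    linarith
  have hlip2 : A ≤ X → ∀ n ∈ Finset.Ico n0 N,
      ‖f (((r + d*n : ℕ)) : ℝ) - (1/(d:ℂ)) * ∫ t in (A*(n:ℝ))..(A*(n:ℝ)+A), f t‖
      ≤ c0 * A := by
    intro hAX n hn
    set u : ℝ := ((r + d*n : ℕ) : ℝ) with hu
    have hu1 : u = (r:ℝ) + A*(n:ℝ) := by rw [hu, hA]; push_cast; ring
    have hr0 : (0:ℝ) ≤ (r:ℝ) := Nat.cast_nonneg r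
    have hrA : (r:ℝ) < A := by rw [hA]; exact_mod_cast hrd
    have hAn0 : (0:ℝ) ≤ A*(n:ℝ) := by positivity
    have huM : u ≤ X := by
      have h4 := (F1 n hn).2
      have h5 : ((r + d*n : ℕ):ℝ) ≤ (M:ℝ) := by exact_mod_cast h4
      rw [← hu] at h5
      linarith
    have hu0 : 0 ≤ u := by rw [hu1]; positivity
    have hkey : f u - (1/(d:ℂ)) * ∫ t in (A*(n:ℝ))..(A*(n:ℝ)+A), f t
        = (1/(d:ℂ)) * ∫ t in (A*(n:ℝ))..(A*(n:ℝ)+A), (f u - f t) := by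
      rw [intervalIntegral.integral_sub (intervalIntegrable_const) (hfi _ _),
        intervalIntegral.integral_const]
      rw [show (A*(n:ℝ)+A) - A*(n:ℝ) = A by ring]
      rw [mul_sub]
      congr 1
      rw [Complex.real_smul, hA]
      push_cast
      field_simp
    rw [hkey, norm_mul, hnormd]
    have hpt : ∀ t ∈ Set.uIoc (A*(n:ℝ)) (A*(n:ℝ)+A), ‖f u - f t‖ ≤ c0 * A := by
      intro t ht
      rw [Set.uIoc_of_le (by linarith)] at ht
      have ht1 : A*(n:ℝ) < t := ht.1
      have ht2 : t ≤ A*(n:ℝ) + A := ht.2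
      have h2X : (0:ℝ) ≤ 2*X := by linarith
      have hs : u ∈ Set.Icc (0:ℝ) (2*X) := ⟨hu0, by linarith⟩
      have htI : t ∈ Set.Icc (0:ℝ) (2*X) := by
        constructor
        · linarith
        · have : A*(n:ℝ) ≤ u := by rw [hu1]; linarith
          linarith
      have hl := f_lip β m h2X hs htI
      have habs : |u - t| ≤ A := by
        rw [abs_sub_le_iff]
        constructor
        · have : u ≤ A*(n:ℝ) + A := by rw [hu1]; linarith
          linarith
        · have : A*(n:ℝ) ≤ u := by rw [hu1]; linarith
          linarith
      calc ‖f u - f t‖ ≤ 2 * Real.pi * |β| * m * (2*X) ^ (m - 1) * |u - t| := hl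
        _ ≤ c0 * A := by
            rw [hc0]
            apply mul_le_mul_of_nonneg_left habs (by positivity)
    have hni := intervalIntegral.norm_integral_le_of_norm_le_const hpt
    rw [show (A*(n:ℝ)+A) - A*(n:ℝ) = A by ring, abs_of_nonneg hA0.le] at hni
    calc 1/A * ‖∫ t in (A*(n:ℝ))..(A*(n:ℝ)+A), (f u - f t)‖ ≤ 1/A * (c0 * A * A) := by
          apply mul_le_mul_of_nonneg_left hni (by positivity)
      _ = c0 * A := by field_simp
  -- bound on the main sum
  have hbig : (0:ℝ) ≤ 2 * Real.pi * (m:ℝ) * 2^m * |β| * X^m := by positivity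
  have hsum : ‖∑ n ∈ Finset.Ico n0 N,
        (f (((r + d*n : ℕ)) : ℝ) - (1/(d:ℂ)) * ∫ t in (A*(n:ℝ))..(A*(n:ℝ)+A), f t)‖
      ≤ 2 + 2 * Real.pi * (m:ℝ) * 2^m * |β| * X^m := by
    by_cases hAX : A ≤ X
    · have h1 : ‖∑ n ∈ Finset.Ico n0 N,
          (f (((r + d*n : ℕ)) : ℝ) - (1/(d:ℂ)) * ∫ t in (A*(n:ℝ))..(A*(n:ℝ)+A), f t)‖
          ≤ (Finset.Ico n0 N).card • (c0 * A) := by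
        refine (norm_sum_le _ _).trans ?_
        exact Finset.sum_le_card_nsmul _ _ _ (fun n hn => hlip2 hAX n hn)
      have h2 : ((Finset.Ico n0 N).card : ℝ) * (c0 * A) ≤ c0 * (2*X) := by
        have hcard : ((Finset.Ico n0 N).card : ℝ) ≤ (N:ℝ) := by
          rw [Nat.card_Ico]
          exact_mod_cast Nat.sub_le N n0
        have hAN2X : A * (N:ℝ) ≤ 2*X := by linarith [F4r]
        have hc0A : 0 ≤ c0 * A := by positivity
        calc ((Finset.Ico n0 N).card : ℝ) * (c0 * A) ≤ (N:ℝ) * (c0 * A) := by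
              apply mul_le_mul_of_nonneg_right hcard hc0A
          _ = c0 * (A * (N:ℝ)) := by ring
          _ ≤ c0 * (2*X) := mul_le_mul_of_nonneg_left hAN2X hc0nn
      have h3 : c0 * (2*X) = 2 * Real.pi * |β| * (m:ℝ) * (2*X)^m := by
        rw [hc0]
        have : (2*X)^(m-1) * (2*X) = (2*X)^m := by
          rw [← pow_succ]
          congr 1
          omega
        rw [← this]
        ring
      have h4 : (2*X)^m = 2^m * X^m := by rw [mul_pow]
      rw [nsmul_eq_mul] at h1
      have h5 : c0 * (2*X) = 2 * Real.pi * (m:ℝ) * 2^m * |β| * X^m := by rw [h3]; ring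
      have := h1.trans (h2.trans_eq h5)
      linarith
    · have hcard : (Finset.Ico n0 N).card ≤ 1 := by
        rw [Nat.card_Ico]
        by_contra hc
        push_neg at hc
        have hNn : n0 + 1 < N := by omega
        have hmem : n0 + 1 ∈ Finset.Ico n0 N := Finset.mem_Ico.mpr ⟨by omega, hNn⟩
        have h4 := (F1 _ hmem).2
        have h5 : d ≤ d * (n0 + 1) := Nat.le_mul_of_pos_right d (by omega)
        have h6 : d ≤ M := by omega
        have h7 : A ≤ (M:ℝ) := by rw [hA]; exact_mod_cast h6
        push_neg at hAX
        linarith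
      have h1 : ‖∑ n ∈ Finset.Ico n0 N,
          (f (((r + d*n : ℕ)) : ℝ) - (1/(d:ℂ)) * ∫ t in (A*(n:ℝ))..(A*(n:ℝ)+A), f t)‖
          ≤ (Finset.Ico n0 N).card • (2:ℝ) := by
        refine (norm_sum_le _ _).trans ?_
        exact Finset.sum_le_card_nsmul _ _ _ (fun n _ => htriv n)
      rw [nsmul_eq_mul] at h1
      have h2 : ((Finset.Ico n0 N).card : ℝ) * 2 ≤ 2 := by
        have : ((Finset.Ico n0 N).card : ℝ) ≤ 1 := by exact_mod_cast hcard
        linarith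
      linarith
  -- assemble
  rw [hT, hdec]
  have step1 := norm_sub_le (∑ n ∈ Finset.Ico n0 N,
      (f (((r + d*n : ℕ)) : ℝ) - (1/(d:ℂ)) * ∫ t in (A*(n:ℝ))..(A*(n:ℝ)+A), f t)
      - (1/(d:ℂ)) * ∫ t in (0:ℝ)..(A*(n0:ℝ)), f t)
    ((1/(d:ℂ)) * ∫ t in (A*(N:ℝ))..X, f t)
  have step2 := norm_sub_le (∑ n ∈ Finset.Ico n0 N,
      (f (((r + d*n : ℕ)) : ℝ) - (1/(d:ℂ)) * ∫ t in (A*(n:ℝ))..(A*(n:ℝ)+A), f t))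
    ((1/(d:ℂ)) * ∫ t in (0:ℝ)..(A*(n0:ℝ)), f t)
  refine le_trans step1 ?_
  have hb := le_trans step2 (add_le_add hsum hb0)
  have hfin := add_le_add hb hb2
  refine le_trans hfin ?_
  linarith


theorem key_dec (m : ℕ) (h H q : ℕ) (a : ℤ) (βr : ℝ) (hhH : h < H) (hq : 0 < q) (u : ℕ) :
    (if u % H = h then e (((a:ℝ)/q + βr) * (u:ℝ)^m) else 0)
    = ∑ k ∈ Finset.range q, (if u % (q*H) = H*k + h then
        e ((a:ℝ) * ((H*k + h : ℕ):ℝ)^m / q) * e (βr * (u:ℝ)^m) else 0) := by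
  have hH : 0 < H := lt_of_le_of_lt (Nat.zero_le h) hhH
  by_cases hu : u % H = h
  · rw [if_pos hu]
    set k0 := (u / H) % q with hk0def
    have hk0 : k0 < q := Nat.mod_lt _ hq
    have hmod : u % (q*H) = H * k0 + h := by
      rw [Nat.mul_comm q H, Nat.mod_mul, hu, hk0def, Nat.add_comm]
    rw [Finset.sum_eq_single k0]
    · rw [if_pos hmod]
      set r := H * k0 + h with hr
      -- u ≡ r mod q
      have hqd : q ∣ q * H := dvd_mul_right q H
      have humod : u % q = r % q := by
        rw [← Nat.mod_mod_of_dvd u hqd, hmod]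
      have hZ : (u:ℤ) ≡ (r:ℤ) [ZMOD (q:ℕ)] := by
        show (u:ℤ) % (q:ℤ) = (r:ℤ) % (q:ℤ)
        exact_mod_cast humod
      obtain ⟨c, hc⟩ := ((hZ.pow m).symm).dvd
      have hq0 : (q:ℝ) ≠ 0 := Nat.cast_ne_zero.mpr hq.ne'
      have hcr : (u:ℝ)^m - ((r:ℕ):ℝ)^m = (q:ℝ) * (c:ℝ) := by exact_mod_cast hc
      have h1 : ((a:ℝ)/q + βr) * (u:ℝ)^m
          = ((a:ℝ) * ((r:ℕ):ℝ)^m / q + βr * (u:ℝ)^m) + ((a*c : ℤ):ℝ) := by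
        have : ((a*c : ℤ):ℝ) = (a:ℝ) * (c:ℝ) := by push_cast; ring
        rw [this]
        field_simp
        linear_combination (a:ℝ) * hcr
      rw [h1, e_int_add, e_add]
    · intro k hk hne
      rw [if_neg]
      intro hcon
      rw [hmod] at hcon
      have : k = k0 := by
        have := Nat.add_right_cancel hcon
        exact (Nat.eq_of_mul_eq_mul_left hH this).symm
      exact hne this
    · intro hk0q
      exact absurd (Finset.mem_range.mpr hk0) hk0q
  · rw [if_neg hu]
    symm
    apply Finset.sum_eq_zero
    intro k _
    rw [if_neg]
    intro hcon
    apply hu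
    have h1 : H ∣ q * H := dvd_mul_left H q
    rw [← Nat.mod_mod_of_dvd u h1, hcon, Nat.add_comm, Nat.add_mul_mod_self_left,
      Nat.mod_eq_of_lt hhH]


/-- Major arc approximation of the exponential sum over an arithmetic progression. -/
theorem major_arc_exponential_sum_approx (m : ℕ) (hm : 1 ≤ m) :
    ∃ C : ℝ, 0 < C ∧ ∀ (h H : ℕ) (X : ℝ) (a : ℤ) (q : ℕ) (β : ℝ),
      h < H → 1 ≤ X → 0 < q →
      ‖(∑ u ∈ Finset.Icc 1 ⌊X⌋₊,
            if u % H = h then e (((a : ℝ) / q + β) * (u : ℝ) ^ m) else 0)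
        - (X / (q * H)) *
            (∑ k ∈ Finset.range q, e ((a : ℝ) * ((H * k + h : ℕ) : ℝ) ^ m / q)) *
            ∫ z in (0:ℝ)..(1:ℝ), e (β * X ^ m * z ^ m)‖
      ≤ C * ((q : ℝ) + (q : ℝ) * X ^ m * |β|) := by
  refine ⟨5 + 2 * Real.pi * (m:ℝ) * 2^m, by positivity, ?_⟩
  intro h H X a q β hhH hX hq
  have hH : 0 < H := lt_of_le_of_lt (Nat.zero_le h) hhH
  have hd0 : 0 < q * H := Nat.mul_pos hq hH
  have hX0 : (0:ℝ) < X := lt_of_lt_of_le one_pos hX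
  set f : ℝ → ℂ := fun t => e (β * t ^ m) with hf
  -- substitution in the integral
  have hsub : (∫ z in (0:ℝ)..(1:ℝ), e (β * X ^ m * z ^ m))
      = X⁻¹ • ∫ t in (0:ℝ)..X, f t := by
    have h1 : ∀ z : ℝ, f (X * z) = e (β * X^m * z^m) := by
      intro z; rw [hf]; simp only [mul_pow]; ring_nf
    rw [show (∫ z in (0:ℝ)..(1:ℝ), e (β * X ^ m * z ^ m))
        = ∫ z in (0:ℝ)..(1:ℝ), f (X * z) by
      refine intervalIntegral.integral_congr (fun z _ => (h1 z).symm)]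
    rw [intervalIntegral.integral_comp_mul_left f hX0.ne']
    norm_num
  -- coefficient identity
  have hcoef : ∀ w : ℂ, ((X:ℂ) / ((q:ℂ) * (H:ℂ))) * w * (X⁻¹ • (∫ t in (0:ℝ)..X, f t))
      = w * ((1/((q*H : ℕ):ℂ)) * ∫ t in (0:ℝ)..X, f t) := by
    intro w
    rw [Complex.real_smul]
    have hq0 : (q:ℂ) ≠ 0 := Nat.cast_ne_zero.mpr hq.ne'
    have hH0 : (H:ℂ) ≠ 0 := Nat.cast_ne_zero.mpr hH.ne'
    have hX0' : (X:ℂ) ≠ 0 := by exact_mod_cast hX0.ne'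
    push_cast
    field_simp
  -- decompose the sum
  have hdecomp : (∑ u ∈ Finset.Icc 1 ⌊X⌋₊,
        if u % H = h then e (((a : ℝ) / q + β) * (u : ℝ) ^ m) else 0)
      = ∑ k ∈ Finset.range q, e ((a : ℝ) * ((H * k + h : ℕ) : ℝ) ^ m / q) *
          (∑ u ∈ Finset.Icc 1 ⌊X⌋₊, if u % (q*H) = H*k + h then f u else 0) := by
    rw [Finset.sum_congr rfl (fun u _ => key_dec m h H q a β hhH hq u), Finset.sum_comm]
    refine Finset.sum_congr rfl (fun k _ => ?_)
    rw [Finset.mul_sum]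
    refine Finset.sum_congr rfl (fun u _ => ?_)
    rw [mul_ite, mul_zero]
  rw [hdecomp, hsub, hcoef, Finset.sum_mul, ← Finset.sum_sub_distrib]
  have hterm : ∀ k ∈ Finset.range q,
      ‖e ((a:ℝ) * ((H*k + h : ℕ):ℝ)^m / q)
          * (∑ u ∈ Finset.Icc 1 ⌊X⌋₊, if u % (q*H) = H*k+h then f u else 0)
        - e ((a:ℝ) * ((H*k + h : ℕ):ℝ)^m / q)
          * ((1/((q*H : ℕ):ℂ)) * ∫ t in (0:ℝ)..X, f t)‖
      ≤ 5 + 2 * Real.pi * (m:ℝ) * 2^m * |β| * X^m := by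
    intro k hk
    rw [← mul_sub, norm_mul, norm_e, one_mul]
    have hrd : H*k + h < q*H := by
      rw [Finset.mem_range] at hk
      calc H*k + h < H*(k+1) := by
            rw [Nat.mul_add, Nat.mul_one]; omega
        _ ≤ H*q := Nat.mul_le_mul_left H hk
        _ = q*H := Nat.mul_comm H q
    exact prog β m hm hX hd0 hrd
  refine le_trans (norm_sum_le _ _) ?_
  refine le_trans (Finset.sum_le_card_nsmul _ _ _ hterm) ?_
  rw [Finset.card_range, nsmul_eq_mul]
  have hqr : (0:ℝ) ≤ (q:ℝ) := Nat.cast_nonneg q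
  have hc1 : (0:ℝ) ≤ 2 * Real.pi * (m:ℝ) * 2^m := by positivity
  have hx : (0:ℝ) ≤ X^m := by positivity
  have hb : (0:ℝ) ≤ |β| := abs_nonneg β
  nlinarith [mul_nonneg hqr hc1, mul_nonneg (mul_nonneg hqr hx) hb,
    mul_nonneg (mul_nonneg (mul_nonneg hqr hx) hb) hc1]
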